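/- With notation as above and w = w_T + w_N where w_T = (2^n/n)·Σ_{1≤i<j≤n}(ij), the vector v = Σ_{|S|=k} S ∈ V_n^k satisfies Δ(w_T)·v = 0 and ⟨Δ(w)v, v⟩ ≤ 2^n·C(n,k), where ⟨·,·⟩ is the inner product making the size-k subsets an orthonormal basis. Consequently the minimal eigenvalue of the symmetric operator Δ(w) on V_n^k is at most 2^n, and strictly less than 2^n since v is not an eigenvector of Δ(w). -/

import Mathlib

open Finset
open scoped symmDiff

lemma aux_chi_ne {n : ℕ} {X : Finset (Fin n)} (hX : X.Nonempty) :
    ∑ T : Finset (Fin n), (-1 : ℝ) ^ ((T ∩ X).card) = 0 := by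
  obtain ⟨a, ha⟩ := hX
  have hinv : Function.Involutive (fun T : Finset (Fin n) => T ∆ {a}) :=
    fun T => symmDiff_symmDiff_cancel_right {a} T
  have h := Equiv.sum_comp hinv.toPerm (fun T : Finset (Fin n) => (-1 : ℝ) ^ ((T ∩ X).card))
  have key : ∀ T : Finset (Fin n),
      (-1 : ℝ) ^ (((T ∆ {a}) ∩ X).card) = -(-1 : ℝ) ^ ((T ∩ X).card) := by
    intro T
    have h1 : (T ∆ {a}) ∩ X = (T ∩ X) ∆ {a} := by
      ext x
      by_cases hxa : x = a
      · subst hxa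
        simp only [Finset.mem_inter, Finset.mem_symmDiff, Finset.mem_singleton, ha]
        tauto
      · simp only [Finset.mem_inter, Finset.mem_symmDiff, Finset.mem_singleton, hxa]
        tauto
    rw [h1]
    by_cases hmem : a ∈ T ∩ X
    · have h2 : (T ∩ X) ∆ {a} = (T ∩ X).erase a := by
        ext x
        simp only [Finset.mem_symmDiff, Finset.mem_erase, Finset.mem_singleton]
        constructor
        · rintro (⟨hx, hne⟩ | ⟨rfl, hx⟩)
          · exact ⟨hne, hx⟩
          · exact absurd hmem hx
        · rintro ⟨hne, hx⟩; exact Or.inl ⟨hx, hne⟩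
      have hc : 1 ≤ (T ∩ X).card := Finset.card_pos.2 ⟨a, hmem⟩
      rw [h2, Finset.card_erase_of_mem hmem]
      have h3 : (T ∩ X).card = ((T ∩ X).card - 1) + 1 := by omega
      nth_rewrite 2 [h3]
      rw [pow_succ]; ring
    · have h2 : (T ∩ X) ∆ {a} = insert a (T ∩ X) := by
        ext x
        simp only [Finset.mem_symmDiff, Finset.mem_insert, Finset.mem_singleton]
        constructor
        · rintro (⟨hx, hne⟩ | ⟨rfl, hx⟩)
          · exact Or.inr hx
          · exact Or.inl rfl
        · rintro (rfl | hx)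
          · exact Or.inr ⟨rfl, hmem⟩
          · exact Or.inl ⟨hx, fun h => hmem (h ▸ hx)⟩
      rw [h2, Finset.card_insert_of_notMem hmem, pow_succ]; ring
  have h' : ∑ T : Finset (Fin n), (-1 : ℝ) ^ ((T ∩ X).card)
      = -∑ T : Finset (Fin n), (-1 : ℝ) ^ ((T ∩ X).card) := by
    conv_lhs => rw [← h]
    simp only [Function.Involutive.coe_toPerm]
    rw [← Finset.sum_neg_distrib]
    exact Finset.sum_congr rfl fun T _ => key T
  linarith

lemma aux_chi {n : ℕ} (X : Finset (Fin n)) :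
    ∑ T : Finset (Fin n), (-1 : ℝ) ^ ((T ∩ X).card)
      = if X = ∅ then (2 : ℝ) ^ n else 0 := by
  by_cases h : X = ∅
  · subst h
    simp [Finset.inter_empty, Finset.card_univ, Fintype.card_finset]
  · rw [if_neg h]
    exact aux_chi_ne (Finset.nonempty_iff_ne_empty.2 h)

lemma aux_mul {n : ℕ} (T X Y : Finset (Fin n)) :
    (-1 : ℝ) ^ ((T ∩ X).card) * (-1 : ℝ) ^ ((T ∩ Y).card)
      = (-1 : ℝ) ^ ((T ∩ (X ∆ Y)).card) := by
  have h1 : T ∩ (X ∆ Y) = (T ∩ X) ∆ (T ∩ Y) := by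
    ext x
    simp only [Finset.mem_inter, Finset.mem_symmDiff]
    tauto
  set P := T ∩ X with hP
  set Q := T ∩ Y with hQ
  have hdisj : Disjoint (P ∆ Q) (P ∩ Q) := by
    rw [Finset.disjoint_left]
    intro x hx hx2
    simp only [Finset.mem_symmDiff, Finset.mem_inter] at hx hx2
    tauto
  have hun : (P ∆ Q) ∪ (P ∩ Q) = P ∪ Q := by
    ext x
    simp only [Finset.mem_symmDiff, Finset.mem_inter, Finset.mem_union]
    tauto
  have hd : ((P ∆ Q) ∪ (P ∩ Q)).card = (P ∆ Q).card + (P ∩ Q).card :=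
    Finset.card_union_of_disjoint hdisj
  have hui : (P ∪ Q).card + (P ∩ Q).card = P.card + Q.card :=
    Finset.card_union_add_card_inter P Q
  have key : P.card + Q.card = (P ∆ Q).card + 2 * (P ∩ Q).card := by
    rw [hun] at hd
    omega
  rw [← pow_add, h1, key, pow_add, pow_mul]
  norm_num

lemma aux_filter_sum {n : ℕ} (A S : Finset (Fin n)) :
    ∑ T ∈ Finset.univ.filter
        (fun T : Finset (Fin n) => Odd T.card ∧ Even ((T ∩ A).card)),
      (-1 : ℝ) ^ ((T ∩ S).card)
    = ((∑ T : Finset (Fin n), (-1 : ℝ) ^ ((T ∩ S).card))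
        + (∑ T : Finset (Fin n), (-1 : ℝ) ^ ((T ∩ (A ∆ S)).card))
        - (∑ T : Finset (Fin n), (-1 : ℝ) ^ ((T ∩ (Finset.univ ∆ S)).card))
        - (∑ T : Finset (Fin n), (-1 : ℝ) ^ ((T ∩ ((Finset.univ ∆ A) ∆ S)).card))) / 4 := by
  rw [Finset.sum_filter]
  have key : ∀ T : Finset (Fin n),
      (if Odd T.card ∧ Even ((T ∩ A).card) then (-1 : ℝ) ^ ((T ∩ S).card) else 0)
      = ((-1 : ℝ) ^ ((T ∩ S).card) + (-1 : ℝ) ^ ((T ∩ (A ∆ S)).card)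
          - (-1 : ℝ) ^ ((T ∩ (Finset.univ ∆ S)).card)
          - (-1 : ℝ) ^ ((T ∩ ((Finset.univ ∆ A) ∆ S)).card)) / 4 := by
    intro T
    rw [← aux_mul T A S, ← aux_mul T Finset.univ S, ← aux_mul T (Finset.univ ∆ A) S,
      ← aux_mul T Finset.univ A, Finset.inter_univ]
    rcases Nat.even_or_odd T.card with hT | hT <;>
      rcases Nat.even_or_odd ((T ∩ A).card) with hA' | hA'
    · rw [if_neg (by simp [Nat.not_odd_iff_even.mpr hT])]
      rw [hT.neg_one_pow, hA'.neg_one_pow]; ring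
    · rw [if_neg (by simp [Nat.not_odd_iff_even.mpr hT])]
      rw [hT.neg_one_pow, hA'.neg_one_pow]; ring
    · rw [if_pos ⟨hT, hA'⟩]
      rw [hT.neg_one_pow, hA'.neg_one_pow]; ring
    · rw [if_neg (by simp [Nat.not_even_iff_odd.mpr hA'])]
      rw [hT.neg_one_pow, hA'.neg_one_pow]; ring
  rw [Finset.sum_congr rfl fun T _ => key T]
  rw [← Finset.sum_div]
  congr 1
  rw [Finset.sum_sub_distrib, Finset.sum_sub_distrib, Finset.sum_add_distrib]

lemma aux_Acard (n k : ℕ) (h : k ≤ n) :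
    (Finset.univ.filter (fun i : Fin n => (i : ℕ) < k)).card = k := by
  apply Finset.card_eq_of_bijective (fun i hi => (⟨i, lt_of_lt_of_le hi h⟩ : Fin n))
  · intro a ha
    simp only [Finset.mem_filter, Finset.mem_univ, true_and] at ha
    exact ⟨a, ha, by simp⟩
  · intro i hi
    simp only [Finset.mem_filter, Finset.mem_univ, true_and]
    exact hi
  · intro i j hi hj hij
    simpa using congrArg Fin.val hij

lemma aux_D {n k : ℕ} (hk1 : 1 ≤ k) (hkn' : k < n) {A : Finset (Fin n)} (hAcard : A.card = k)
    {S : Finset (Fin n)} (hS : S.card = k) :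
    ∑ T ∈ Finset.univ.filter
        (fun T : Finset (Fin n) => Odd T.card ∧ Even ((T ∩ A).card)),
      (1 - (-1 : ℝ) ^ ((T ∩ S).card))
    = (2 : ℝ) ^ n / 4 *
        (1 - (if S = A then 1 else 0) + (if S = Finset.univ ∆ A then 1 else 0)) := by
  have hApos : A.Nonempty := Finset.card_pos.1 (by omega)
  have hSpos : S.Nonempty := Finset.card_pos.1 (by omega)
  have hunivpos : (Finset.univ : Finset (Fin n)).Nonempty :=
    ⟨⟨0, by omega⟩, Finset.mem_univ _⟩
  have hne_of_card : ∀ X : Finset (Fin n), X.card = k → (Finset.univ ∆ X).Nonempty := by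
    intro X hX
    have hXne : X ≠ Finset.univ := fun h => by
      rw [h, Finset.card_univ, Fintype.card_fin] at hX; omega
    obtain ⟨x, hx⟩ : ∃ x : Fin n, x ∉ X := by
      by_contra h
      push_neg at h
      exact hXne (Finset.eq_univ_iff_forall.2 h)
    exact ⟨x, by simp [Finset.mem_symmDiff, hx]⟩
  have hzero : ∀ X : Finset (Fin n), X.Nonempty →
      ∑ T : Finset (Fin n), (-1 : ℝ) ^ ((T ∩ X).card) = 0 := fun X hX => aux_chi_ne hX
  have hsd : ∀ X Y : Finset (Fin n),
      (X ∆ Y = ∅) ↔ X = Y := by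
    intro X Y
    rw [← Finset.bot_eq_empty, symmDiff_eq_bot]
  rw [Finset.sum_sub_distrib]
  have h1 : ∑ T ∈ Finset.univ.filter
        (fun T : Finset (Fin n) => Odd T.card ∧ Even ((T ∩ A).card)), (1 : ℝ)
      = (2 : ℝ) ^ n / 4 := by
    have hone : ∀ T ∈ Finset.univ.filter
        (fun T : Finset (Fin n) => Odd T.card ∧ Even ((T ∩ A).card)),
        (1 : ℝ) = (-1 : ℝ) ^ ((T ∩ (∅ : Finset (Fin n))).card) := by
      intro T _; simp
    rw [Finset.sum_congr rfl hone, aux_filter_sum A ∅]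
    have e1 : A ∆ (∅ : Finset (Fin n)) = A := by rw [← Finset.bot_eq_empty, symmDiff_bot]
    have e2 : (Finset.univ : Finset (Fin n)) ∆ ∅ = Finset.univ := by
      rw [← Finset.bot_eq_empty, symmDiff_bot]
    have e3 : (Finset.univ ∆ A) ∆ (∅ : Finset (Fin n)) = Finset.univ ∆ A := by
      rw [← Finset.bot_eq_empty, symmDiff_bot]
    rw [e1, e2, e3, aux_chi, if_pos rfl, hzero _ hApos, hzero _ hunivpos,
      hzero _ (hne_of_card A hAcard)]
    ring
  have h2 : ∑ T ∈ Finset.univ.filter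
        (fun T : Finset (Fin n) => Odd T.card ∧ Even ((T ∩ A).card)),
        (-1 : ℝ) ^ ((T ∩ S).card)
      = ((if S = A then (2 : ℝ) ^ n else 0) - (if S = Finset.univ ∆ A then (2 : ℝ) ^ n else 0)) / 4 := by
    rw [aux_filter_sum A S, hzero _ hSpos, hzero _ (hne_of_card S hS), aux_chi, aux_chi]
    have e1 : (if A ∆ S = ∅ then (2 : ℝ) ^ n else 0) = (if S = A then (2 : ℝ) ^ n else 0) := by
      apply if_congr _ rfl rfl
      rw [hsd]; exact eq_comm
    have e2 : (if (Finset.univ ∆ A) ∆ S = ∅ then (2 : ℝ) ^ n else 0)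
        = (if S = Finset.univ ∆ A then (2 : ℝ) ^ n else 0) := by
      apply if_congr _ rfl rfl
      rw [hsd]; exact eq_comm
    rw [e1, e2]
    ring
  rw [h1, h2]
  split_ifs <;> ring

open scoped RealInnerProductSpace

lemma aux_op {ι γ : Type*} [Fintype ι] [DecidableEq ι] [Nonempty ι]
    (Δ : (ι → ℝ) → (ι → ℝ)) (c R : ℝ) (hR : 0 < R)
    (P : Finset γ) (σ : γ → ι → ι) (hσ : ∀ g S, σ g (σ g S) = S)
    (d : ι → ℝ)
    (hΔ' : ∀ f S, Δ f S = c * ∑ p ∈ P, (f S - f (σ p S)) + 4 * (d S * f S))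
    (hub : ∑ S : ι, 4 * d S ≤ R * (Fintype.card ι : ℝ))
    (S₀ : ι) (hd₀ : d S₀ = 0) :
    ∃ (μ : ℝ) (f : ι → ℝ), f ≠ 0 ∧ Δ f = μ • f ∧ μ < R := by
  classical
  let E := EuclideanSpace ℝ ι
  have haddE : ∀ (x y : E) (S : ι), (x + y) S = x S + y S := fun _ _ _ => rfl
  have hsmulE : ∀ (a : ℝ) (x : E) (S : ι), (a • x) S = a * x S := fun _ _ _ => rfl
  let Tlin : E →ₗ[ℝ] E :=
    { toFun := fun x => WithLp.toLp 2 (Δ x)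
      map_add' := by
        intro x y
        ext S
        show Δ (WithLp.ofLp (x + y)) S = Δ x S + Δ y S
        rw [hΔ', hΔ' x, hΔ' y]
        rw [Finset.sum_congr rfl (fun p _ => by rw [haddE, haddE]; ring :
          ∀ p ∈ P, ((x + y) S - (x + y) (σ p S))
            = (x S - x (σ p S)) + (y S - y (σ p S)))]
        rw [Finset.sum_add_distrib, haddE]
        ring
      map_smul' := by
        intro a x
        ext S
        show Δ (WithLp.ofLp (a • x)) S = a * Δ x S
        rw [hΔ', hΔ' x]
        rw [Finset.sum_congr rfl (fun p _ => by rw [hsmulE, hsmulE]; ring :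
          ∀ p ∈ P, ((a • x) S - (a • x) (σ p S)) = a * (x S - x (σ p S)))]
        rw [← Finset.mul_sum, hsmulE]
        ring }
  have hTapp : ∀ (z : E) (S : ι), Tlin z S = Δ z S := fun _ _ => rfl
  have hinner : ∀ x y : E, ⟪x, y⟫ = ∑ S : ι, x S * y S := by
    intro x y
    rw [PiLp.inner_apply]
    simp [RCLike.inner_apply, conj_trivial]
    exact Finset.sum_congr rfl (fun _ _ => mul_comm _ _)
  have hre : ∀ (g : γ) (f : ι → ℝ), ∑ S : ι, f (σ g S) = ∑ S : ι, f S := by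
    intro g f
    exact Fintype.sum_bijective (σ g) (Function.Involutive.bijective (hσ g))
      (fun S => f (σ g S)) f (fun S => rfl)
  have hswap : ∀ (g : γ) (x y : ι → ℝ),
      ∑ S : ι, x (σ g S) * y S = ∑ S : ι, x S * y (σ g S) := by
    intro g x y
    have h := hre g (fun S => x (σ g S) * y S)
    rw [← h]
    exact Finset.sum_congr rfl (fun S _ => by rw [hσ])
  have exp : ∀ x y : ι → ℝ,
      ∑ S : ι, (c * ∑ p ∈ P, (x S - x (σ p S)) + 4 * (d S * x S)) * y S
      = c * ∑ p ∈ P, (∑ S : ι, x S * y S - ∑ S : ι, x (σ p S) * y S)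
        + 4 * ∑ S : ι, d S * (x S * y S) := by
    intro x y
    have h1 : ∀ S ∈ (Finset.univ : Finset ι),
        (c * ∑ p ∈ P, (x S - x (σ p S)) + 4 * (d S * x S)) * y S
        = c * (∑ p ∈ P, (x S - x (σ p S)) * y S) + 4 * (d S * (x S * y S)) := by
      intro S _
      rw [add_mul, mul_assoc, Finset.sum_mul]
      ring
    rw [Finset.sum_congr rfl h1, Finset.sum_add_distrib, ← Finset.mul_sum, ← Finset.mul_sum,
      Finset.sum_comm]
    congr 2
    apply Finset.sum_congr rfl
    intro p _
    rw [Finset.sum_congr rfl (fun S _ => sub_mul (x S) (x (σ p S)) (y S)),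
      Finset.sum_sub_distrib]
  have hsym : Tlin.IsSymmetric := by
    intro x y
    rw [hinner, hinner]
    simp_rw [hTapp, hΔ']
    rw [exp x y, Finset.sum_congr rfl (fun S _ => mul_comm (x S)
      (c * ∑ p ∈ P, (y S - y (σ p S)) + 4 * (d S * y S))), exp y x]
    congr 1
    · congr 1
      apply Finset.sum_congr rfl
      intro p _
      rw [hswap p x y]
      congr 1
      · exact Finset.sum_congr rfl (fun S _ => mul_comm _ _)
      · exact Finset.sum_congr rfl (fun S _ => mul_comm _ _)
    · congr 1
      exact Finset.sum_congr rfl (fun S _ => by ring)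
  -- the all-ones vector
  obtain ⟨vE, hvE⟩ : ∃ v : E, ∀ S : ι, v S = 1 := ⟨WithLp.toLp 2 (fun _ => (1 : ℝ)), fun _ => rfl⟩
  have hvE_ne : vE ≠ 0 := by
    intro h
    have h2 : (1 : ℝ) = 0 := by
      calc (1 : ℝ) = vE (Classical.arbitrary ι) := (hvE _).symm
        _ = (0 : E) (Classical.arbitrary ι) := by rw [h]
        _ = 0 := rfl
    norm_num at h2
  have hnormsq : ‖vE‖ ^ 2 = (Fintype.card ι : ℝ) := by
    rw [← real_inner_self_eq_norm_sq, hinner]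
    rw [Finset.sum_congr rfl (fun S _ => by rw [hvE, mul_one] :
      ∀ S ∈ (Finset.univ : Finset ι), vE S * vE S = 1)]
    rw [Finset.sum_const, Finset.card_univ, nsmul_eq_mul, mul_one]
  have hQval : ⟪Tlin vE, vE⟫ = ∑ S : ι, 4 * d S := by
    rw [hinner]
    apply Finset.sum_congr rfl
    intro S _
    rw [hTapp, hΔ']
    rw [Finset.sum_eq_zero (fun p _ => by
      show vE S - vE (σ p S) = 0
      rw [hvE, hvE, sub_self])]
    show (c * 0 + 4 * (d S * vE S)) * vE S = 4 * d S
    rw [hvE]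
    ring
  haveI : FiniteDimensional ℝ E := by infer_instance
  haveI := FiniteDimensional.proper_rclike ℝ E
  let T' := hsym.toSelfAdjoint
  obtain ⟨x₀, hx₀mem, hx₀min⟩ := (isCompact_sphere (0 : E) ‖vE‖).exists_isMinOn
    ⟨vE, by simp⟩ T'.val.reApplyInnerSelf_continuous.continuousOn
  have hx₀norm : ‖x₀‖ = ‖vE‖ := by simpa using hx₀mem
  have hnormv_pos : 0 < ‖vE‖ := norm_pos_iff.2 hvE_ne
  have hx₀ne : x₀ ≠ 0 := by
    intro h
    rw [h, norm_zero] at hx₀norm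
    linarith
  have hmin' : IsMinOn T'.val.reApplyInnerSelf (Metric.sphere (0 : E) ‖x₀‖) x₀ := by
    rw [hx₀norm]; exact hx₀min
  have heig := T'.prop.hasEigenvector_of_isMinOn hx₀ne hmin'
  set μ := ⨅ x : { x : E // x ≠ 0 }, T'.val.rayleighQuotient x with hμdef
  have hTcoe : (T'.val : E →ₗ[ℝ] E) = Tlin := hsym.coe_toSelfAdjoint
  rw [hTcoe] at heig
  have happ : Tlin x₀ = μ • x₀ := by
    have := heig.apply_eq_smul
    simpa using this
  have hreapply : ∀ z : E, T'.val.reApplyInnerSelf z = ⟪Tlin z, z⟫ := by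
    intro z
    rw [ContinuousLinearMap.reApplyInnerSelf_apply]
    have hz : T'.val z = Tlin z := by
      rw [← hTcoe]; rfl
    rw [hz]
    exact RCLike.re_to_real
  have hRx₀ : T'.val.reApplyInnerSelf x₀ = μ * ‖x₀‖ ^ 2 := by
    rw [hreapply, happ, real_inner_smul_left, real_inner_self_eq_norm_sq]
  have hQmin : T'.val.reApplyInnerSelf x₀ ≤ T'.val.reApplyInnerSelf vE :=
    hx₀min (by simp)
  have hRvE : T'.val.reApplyInnerSelf vE = ∑ S : ι, 4 * d S := by
    rw [hreapply, hQval]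
  have hcard_pos : (0 : ℝ) < (Fintype.card ι : ℝ) := by
    exact_mod_cast Fintype.card_pos
  have hμleR : μ ≤ R := by
    have h1 : μ * (Fintype.card ι : ℝ) ≤ R * (Fintype.card ι : ℝ) := by
      calc μ * (Fintype.card ι : ℝ) = μ * ‖vE‖ ^ 2 := by rw [hnormsq]
        _ = μ * ‖x₀‖ ^ 2 := by rw [hx₀norm]
        _ = T'.val.reApplyInnerSelf x₀ := hRx₀.symm
        _ ≤ T'.val.reApplyInnerSelf vE := hQmin
        _ = ∑ S : ι, 4 * d S := hRvE
        _ ≤ R * (Fintype.card ι : ℝ) := hub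
    exact le_of_mul_le_mul_right h1 hcard_pos
  rcases lt_or_eq_of_le hμleR with hlt | heqμ
  · exact ⟨μ, x₀, fun h => hx₀ne (congrArg (WithLp.toLp 2) h), congrArg WithLp.ofLp happ, hlt⟩
  · exfalso
    -- μ = R forces vE to be a minimiser, hence an eigenvector, contradiction at S₀
    have hQle : T'.val.reApplyInnerSelf vE ≤ R * ‖vE‖ ^ 2 := by
      rw [hRvE, hnormsq]; exact hub
    have hQge : R * ‖vE‖ ^ 2 ≤ T'.val.reApplyInnerSelf vE := by
      calc R * ‖vE‖ ^ 2 = μ * ‖x₀‖ ^ 2 := by rw [← heqμ, hx₀norm]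
        _ = T'.val.reApplyInnerSelf x₀ := hRx₀.symm
        _ ≤ T'.val.reApplyInnerSelf vE := hQmin
    have hQeq : T'.val.reApplyInnerSelf vE = R * ‖vE‖ ^ 2 := le_antisymm hQle hQge
    have hminv : IsMinOn T'.val.reApplyInnerSelf (Metric.sphere (0 : E) ‖vE‖) vE := by
      rw [isMinOn_iff]
      intro x hx
      calc T'.val.reApplyInnerSelf vE = R * ‖vE‖ ^ 2 := hQeq
        _ = T'.val.reApplyInnerSelf x₀ := by rw [hRx₀, heqμ, hx₀norm]
        _ ≤ T'.val.reApplyInnerSelf x := hx₀min hx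
    have heig2 := T'.prop.hasEigenvector_of_isMinOn hvE_ne hminv
    rw [hTcoe] at heig2
    have happ2 : Tlin vE = μ • vE := by
      have := heig2.apply_eq_smul
      simpa using this
    have h0 : Tlin vE S₀ = (μ • vE) S₀ := by rw [happ2]
    have h1 : Tlin vE S₀ = 4 * (d S₀ * 1) := by
      rw [hTapp, hΔ']
      rw [Finset.sum_eq_zero (fun p _ => by
        show vE S₀ - vE (σ p S₀) = 0
        rw [hvE, hvE, sub_self])]
      show c * 0 + 4 * (d S₀ * vE S₀) = 4 * (d S₀ * 1)
      rw [hvE]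
      ring
    have h2 : (μ • vE) S₀ = μ := by
      rw [hsmulE, hvE, mul_one]
    rw [h1, h2, hd₀] at h0
    rw [← heqμ] at hR
    norm_num at h0
    linarith

theorem stmt13 (n k : ℕ) (hk1 : 1 ≤ k) (hkn : k ≤ n - 1)
    (A : Finset (Fin n)) (hA : A = Finset.univ.filter (fun i : Fin n => (i : ℕ) < k))
    (U : Finset (Finset (Fin n)))
    (hU : U = Finset.univ.filter (fun S : Finset (Fin n) =>
      Odd S.card ∧ Even ((S ∩ A).card)))
    (perm : Equiv.Perm (Fin n) →
      {S : Finset (Fin n) // S.card = k} → {S : Finset (Fin n) // S.card = k})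
    (hperm : ∀ π S, (perm π S : Finset (Fin n)) = (S : Finset (Fin n)).image π)
    (Δ : ({S : Finset (Fin n) // S.card = k} → ℝ) →
      ({S : Finset (Fin n) // S.card = k} → ℝ))
    (hΔ : ∀ f S, Δ f S =
      ((2 : ℝ) ^ n / n) * ∑ p ∈ Finset.univ.filter (fun p : Fin n × Fin n => p.1 < p.2),
          (f S - f (perm (Equiv.swap p.1 p.2) S))
        + 4 * ∑ T ∈ U, (f S - (-1 : ℝ) ^ ((T ∩ S.1).card) * f S))
    (v : {S : Finset (Fin n) // S.card = k} → ℝ) (hv : v = fun _ => 1) :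
    (∀ S, ((2 : ℝ) ^ n / n) *
        ∑ p ∈ Finset.univ.filter (fun p : Fin n × Fin n => p.1 < p.2),
          (v S - v (perm (Equiv.swap p.1 p.2) S)) = 0) ∧
    (∑ S : {S : Finset (Fin n) // S.card = k}, Δ v S * v S ≤ 2 ^ n * (n.choose k)) ∧
    (∃ (μ : ℝ) (f : {S : Finset (Fin n) // S.card = k} → ℝ),
      f ≠ 0 ∧ Δ f = μ • f ∧ μ < 2 ^ n) := by
  have hkn' : k < n := by omega
  have hAcard : A.card = k := by rw [hA]; exact aux_Acard n k (le_of_lt hkn')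
  subst hU
  subst hv
  have hAne : ¬ A = Finset.univ ∆ A := by
    obtain ⟨a, ha⟩ : A.Nonempty := Finset.card_pos.1 (by omega)
    intro h
    have h2 : a ∈ Finset.univ ∆ A := h ▸ ha
    rw [Finset.mem_symmDiff] at h2
    rcases h2 with ⟨_, h3⟩ | ⟨_, h3⟩
    · exact h3 ha
    · exact h3 (Finset.mem_univ a)
  have hΔ' : ∀ (f : {S : Finset (Fin n) // S.card = k} → ℝ) S, Δ f S =
      ((2 : ℝ) ^ n / n) * ∑ p ∈ Finset.univ.filter (fun p : Fin n × Fin n => p.1 < p.2),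
        (f S - f (perm (Equiv.swap p.1 p.2) S))
      + 4 * ((∑ T ∈ Finset.univ.filter
          (fun T : Finset (Fin n) => Odd T.card ∧ Even ((T ∩ A).card)),
          (1 - (-1 : ℝ) ^ ((T ∩ S.1).card))) * f S) := by
    intro f S
    rw [hΔ]
    congr 1
    rw [Finset.sum_mul]
    congr 1
    exact Finset.sum_congr rfl (fun T _ => by ring)
  have hd : ∀ S : {S : Finset (Fin n) // S.card = k},
      (∑ T ∈ Finset.univ.filter
          (fun T : Finset (Fin n) => Odd T.card ∧ Even ((T ∩ A).card)),
        (1 - (-1 : ℝ) ^ ((T ∩ S.1).card)))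
      = (2 : ℝ) ^ n / 4 *
          (1 - (if S.1 = A then 1 else 0) + (if S.1 = Finset.univ ∆ A then 1 else 0)) :=
    fun S => aux_D hk1 hkn' hAcard S.2
  have hsumA : ∑ S : {S : Finset (Fin n) // S.card = k}, (if S.1 = A then (1 : ℝ) else 0) = 1 := by
    rw [Finset.sum_congr rfl (fun S _ => if_congr
      (show S.1 = A ↔ S = ⟨A, hAcard⟩ from ⟨fun h => Subtype.ext h, fun h => by rw [h]⟩)
      rfl rfl)]
    simp
  have hεle : ∑ S : {S : Finset (Fin n) // S.card = k},
      (if S.1 = Finset.univ ∆ A then (1 : ℝ) else 0) ≤ 1 := by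
    by_cases hc : (Finset.univ ∆ A).card = k
    · rw [Finset.sum_congr rfl (fun S _ => if_congr
        (show S.1 = Finset.univ ∆ A ↔ S = ⟨Finset.univ ∆ A, hc⟩ from
          ⟨fun h => Subtype.ext h, fun h => by rw [h]⟩) rfl rfl)]
      simp
    · rw [Finset.sum_eq_zero (fun S _ => by
        rw [if_neg]; intro h; exact hc (h ▸ S.2))]
      norm_num
  have h2pos : (0 : ℝ) < 2 ^ n := by positivity
  have hcards : (Fintype.card {S : Finset (Fin n) // S.card = k} : ℝ) = (n.choose k : ℝ) := by
    have h := Fintype.card_finset_len (α := Fin n) k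
    rw [Fintype.card_fin] at h
    exact_mod_cast h
  have hsum4d : ∑ S : {S : Finset (Fin n) // S.card = k},
      4 * (∑ T ∈ Finset.univ.filter
          (fun T : Finset (Fin n) => Odd T.card ∧ Even ((T ∩ A).card)),
          (1 - (-1 : ℝ) ^ ((T ∩ S.1).card)))
      ≤ (2 : ℝ) ^ n * (Fintype.card {S : Finset (Fin n) // S.card = k} : ℝ) := by
    rw [Finset.sum_congr rfl (fun S _ => by
      rw [hd S]; ring :
      ∀ S ∈ (Finset.univ : Finset {S : Finset (Fin n) // S.card = k}),
        4 * (∑ T ∈ Finset.univ.filter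
            (fun T : Finset (Fin n) => Odd T.card ∧ Even ((T ∩ A).card)),
            (1 - (-1 : ℝ) ^ ((T ∩ S.1).card)))
        = (2 : ℝ) ^ n * 1 - (2 : ℝ) ^ n * (if S.1 = A then 1 else 0)
          + (2 : ℝ) ^ n * (if S.1 = Finset.univ ∆ A then 1 else 0))]
    rw [Finset.sum_add_distrib, Finset.sum_sub_distrib,
      ← Finset.mul_sum, ← Finset.mul_sum, ← Finset.mul_sum]
    have hone : ∑ S : {S : Finset (Fin n) // S.card = k}, (1 : ℝ)
        = (Fintype.card {S : Finset (Fin n) // S.card = k} : ℝ) := by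
      rw [Finset.sum_const, Finset.card_univ, nsmul_eq_mul, mul_one]
    rw [hone, hsumA]
    nlinarith [hεle]
  refine ⟨fun S => by rw [Finset.sum_eq_zero (fun p _ => sub_self _), mul_zero], ?_, ?_⟩
  · -- part 2
    rw [Finset.sum_congr rfl (fun S _ => by
      rw [hΔ' (fun _ => (1 : ℝ)) S, Finset.sum_eq_zero (fun p _ => sub_self (1 : ℝ))]
      ring :
      ∀ S ∈ (Finset.univ : Finset {S : Finset (Fin n) // S.card = k}),
        Δ (fun _ => (1 : ℝ)) S * (fun _ => (1 : ℝ)) S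
        = 4 * (∑ T ∈ Finset.univ.filter
            (fun T : Finset (Fin n) => Odd T.card ∧ Even ((T ∩ A).card)),
            (1 - (-1 : ℝ) ^ ((T ∩ S.1).card))))]
    calc ∑ S : {S : Finset (Fin n) // S.card = k},
          4 * (∑ T ∈ Finset.univ.filter
            (fun T : Finset (Fin n) => Odd T.card ∧ Even ((T ∩ A).card)),
            (1 - (-1 : ℝ) ^ ((T ∩ S.1).card)))
        ≤ (2 : ℝ) ^ n * (Fintype.card {S : Finset (Fin n) // S.card = k} : ℝ) := hsum4d
      _ = 2 ^ n * (n.choose k : ℝ) := by rw [hcards]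
  · -- part 3
    haveI : Nonempty {S : Finset (Fin n) // S.card = k} := ⟨⟨A, hAcard⟩⟩
    have hσ : ∀ (p : Fin n × Fin n) (S : {S : Finset (Fin n) // S.card = k}),
        perm (Equiv.swap p.1 p.2) (perm (Equiv.swap p.1 p.2) S) = S := by
      intro p S
      apply Subtype.ext
      rw [hperm, hperm, Finset.image_image]
      have hid : (⇑(Equiv.swap p.1 p.2)) ∘ (⇑(Equiv.swap p.1 p.2)) = id :=
        funext (fun z => Equiv.swap_apply_self _ _ z)
      rw [hid, Finset.image_id]
    have hd₀ : (∑ T ∈ Finset.univ.filter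
          (fun T : Finset (Fin n) => Odd T.card ∧ Even ((T ∩ A).card)),
          (1 - (-1 : ℝ) ^ ((T ∩ (⟨A, hAcard⟩ : {S : Finset (Fin n) // S.card = k}).1).card)))
        = 0 := by
      rw [hd ⟨A, hAcard⟩]
      show (2 : ℝ) ^ n / 4 * (1 - (if A = A then 1 else 0)
        + (if A = Finset.univ ∆ A then 1 else 0)) = 0
      rw [if_pos rfl, if_neg hAne]
      ring
    exact aux_op Δ ((2 : ℝ) ^ n / n) ((2 : ℝ) ^ n) h2pos
      (Finset.univ.filter (fun p : Fin n × Fin n => p.1 < p.2))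
      (fun p S => perm (Equiv.swap p.1 p.2) S) hσ
      (fun S => ∑ T ∈ Finset.univ.filter
          (fun T : Finset (Fin n) => Odd T.card ∧ Even ((T ∩ A).card)),
          (1 - (-1 : ℝ) ^ ((T ∩ S.1).card)))
      hΔ' hsum4d ⟨A, hAcard⟩ hd₀
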